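/- arXiv:1209.2890 — 5 statements merged into one kernel-verified Lean document; each statement's English description precedes it below -/
import Mathlib

section
/- The multiset ordering >_m on finite multisets over a set S with a well-founded strict order > is itself well-founded, where >_m is the smallest transitive relation such that a ⊎ [α] >_m a ⊎ b whenever every element β of b satisfies α > β. -/
/-- One step of the multiset ordering: `a ⊎ {α}` is above `a ⊎ b`
whenever every element `β` of `b` satisfies `α > β` (i.e. `r α β`). -/
inductive MultisetStep {S : Type*} (r : S → S → Prop) : Multiset S → Multiset S → Prop
  | step (a b : Multiset S) (α : S) (h : ∀ β ∈ b, r α β) :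
      MultisetStep r (a + {α}) (a + b)

section Aux

variable {S : Type*} {r : S → S → Prop}

private lemma step_inv {M N : Multiset S} (h : MultisetStep r M N) :
    ∃ a b α, (∀ β ∈ b, r α β) ∧ M = a + {α} ∧ N = a + b := by
  cases h with
  | step a b α h => exact ⟨a, b, α, h, rfl, rfl⟩

private lemma acc_zero : Acc (flip (MultisetStep r)) 0 := by
  constructor
  rintro N hN
  obtain ⟨a, b, α, h, hM, hN⟩ := step_inv hN
  exact absurd hM.symm (by simp)

private lemma acc_cons (α : S) (hα : Acc (flip r) α) :
    ∀ M : Multiset S, Acc (flip (MultisetStep r)) M →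
      Acc (flip (MultisetStep r)) (α ::ₘ M) := by
  induction hα with
  | intro α _ ih1 =>
    intro M hM
    induction hM with
    | intro M hMacc ih2 =>
      -- auxiliary: adding a multiset of elements all below α preserves accessibility
      have add_acc : ∀ b : Multiset S, (∀ β ∈ b, r α β) →
          ∀ N : Multiset S, Acc (flip (MultisetStep r)) N →
            Acc (flip (MultisetStep r)) (N + b) := by
        intro b
        induction b using Multiset.induction with
        | empty => intro _ N hN; simpa using hN
        | cons β b ihb =>
          intro hb N hN
          have h1 : Acc (flip (MultisetStep r)) (N + b) :=
            ihb (fun γ hγ => hb γ (Multiset.mem_cons_of_mem hγ)) N hN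
          have h2 := ih1 β (hb β (Multiset.mem_cons_self β b)) (N + b) h1
          simpa [Multiset.add_cons] using h2
      constructor
      rintro N hN
      obtain ⟨a, b, γ, h, hMeq, hNeq⟩ := step_inv hN
      · have key : α ::ₘ M = γ ::ₘ a := by
          have : a + ({γ} : Multiset S) = γ ::ₘ a := by
            rw [add_comm]; simp [Multiset.singleton_add]
          rw [← this]; exact hMeq
        rcases (Multiset.cons_eq_cons.mp key) with ⟨hαγ, haM⟩ | ⟨hne, a', ha', hM'⟩
        · -- γ = α, a = M : N = M + b with all β ∈ b below α
          subst hαγ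
          rw [hNeq, ← haM]
          exact add_acc b h M (Acc.intro M hMacc)
        · -- α ∈ a : a = α ::ₘ a', M = γ ::ₘ a'
          subst ha'
          have hstep : flip (MultisetStep r) (a' + b) (γ ::ₘ a') := by
            show MultisetStep r (γ ::ₘ a') (a' + b)
            have : γ ::ₘ a' = a' + ({γ} : Multiset S) := by
              rw [add_comm]; simp [Multiset.singleton_add]
            rw [this]
            exact MultisetStep.step a' b γ h
          have hacc := ih2 (a' + b) hstep
          have heq : N = α ::ₘ (a' + b) := by
            rw [hNeq, hM']; simp [Multiset.cons_add]
          rw [heq]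
          exact hacc

private lemma acc_all (hr : WellFounded (flip r)) :
    ∀ M : Multiset S, Acc (flip (MultisetStep r)) M := by
  intro M
  induction M using Multiset.induction with
  | empty => exact acc_zero
  | cons α M ih => exact acc_cons α (hr.apply α) M ih

end Aux

/-- The multiset ordering `>_m` (the transitive closure of `MultisetStep r`) on finite
multisets over `S` is well-founded whenever the strict order `r` (`α > β` is `r α β`)
is well-founded. -/
theorem multiset_ordering_wellFounded {S : Type*} (r : S → S → Prop)
    (hr : WellFounded (flip r)) :
    WellFounded (flip (Relation.TransGen (MultisetStep r))) := by
  have h1 : WellFounded (flip (MultisetStep r)) := ⟨acc_all hr⟩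
  have h2 : WellFounded (Relation.TransGen (flip (MultisetStep r))) := h1.transGen
  have : flip (Relation.TransGen (MultisetStep r)) =
      Relation.TransGen (flip (MultisetStep r)) := by
    ext x y
    exact (Relation.transGen_swap).symm
  rw [this]
  exact h2
end

section
/- In the category MRel (objects: sets; morphisms S → T: subsets of Multiset S × T), composition t ∘ s = {(a, β) | ∃ k, ∃ (a₁,α₁),…,(a_k,α_k) ∈ s, a = a₁ ⊎ ⋯ ⊎ a_k and ([α₁,…,α_k], β) ∈ t} is associative. -/
/-- Composition in the category `MRel`: a morphism from `S` to `T` is a subset of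
`Multiset S × T`, and `(a, β) ∈ t ∘ s` iff there is a multiset `l` of pairs of `s`
whose first components sum to `a` and whose multiset of second components is related
to `β` by `t`. -/
def MComp {S T U : Type*} (t : Set (Multiset T × U)) (s : Set (Multiset S × T)) :
    Set (Multiset S × U) :=
  {p | ∃ l : Multiset (Multiset S × T), (∀ q ∈ l, q ∈ s) ∧
        p.1 = (l.map Prod.fst).sum ∧ (l.map Prod.snd, p.2) ∈ t}

/-- If the image of a multiset splits as a sum, the multiset splits accordingly. -/
lemma map_eq_add_split {α β : Type*} (f : α → β) :
    ∀ (b : Multiset β) (l : Multiset α) (c : Multiset β), l.map f = b + c →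
    ∃ l₁ l₂, l = l₁ + l₂ ∧ l₁.map f = b ∧ l₂.map f = c := by
  intro b
  induction b using Multiset.induction with
  | empty => intro l c h; exact ⟨0, l, by simp, by simp, by simpa using h⟩
  | cons x b ih =>
    intro l c h
    have hx : x ∈ l.map f := by rw [h]; simp
    obtain ⟨a, ha, hfa⟩ := Multiset.mem_map.1 hx
    obtain ⟨l', rfl⟩ := Multiset.exists_cons_of_mem ha
    rw [Multiset.map_cons, hfa, Multiset.cons_add] at h
    have h' : l'.map f = b + c := (Multiset.cons_inj_right _).1 h
    obtain ⟨l₁, l₂, rfl, h1, h2⟩ := ih l' c h'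
    exact ⟨a ::ₘ l₁, l₂, by rw [Multiset.cons_add], by rw [Multiset.map_cons, hfa, h1], h2⟩

/-- Composition in `MRel` is associative. -/
theorem MComp_assoc {S T U V : Type*} (s : Set (Multiset S × T))
    (t : Set (Multiset T × U)) (u : Set (Multiset U × V)) :
    MComp u (MComp t s) = MComp (MComp u t) s := by
  ext ⟨a, γ⟩
  constructor
  · rintro ⟨l, hl, ha, hu⟩
    -- build, by induction on l, a multiset l' of s-pairs and m of t-pairs
    suffices h : ∀ l : Multiset (Multiset S × U), (∀ q ∈ l, q ∈ MComp t s) →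
        ∃ (l' : Multiset (Multiset S × T)) (m : Multiset (Multiset T × U)),
          (∀ q ∈ l', q ∈ s) ∧ (∀ q ∈ m, q ∈ t) ∧
          (l'.map Prod.fst).sum = (l.map Prod.fst).sum ∧
          l'.map Prod.snd = (m.map Prod.fst).sum ∧
          m.map Prod.snd = l.map Prod.snd by
      obtain ⟨l', m, hs', ht', h1, h2, h3⟩ := h l hl
      exact ⟨l', hs', by rw [ha, h1], ⟨m, ht', by simpa using h2, by rw [h3]; exact hu⟩⟩
    clear hl ha hu l
    intro l
    induction l using Multiset.induction with
    | empty => exact fun _ => ⟨0, 0, by simp, by simp, by simp, by simp, by simp⟩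
    | cons p l ih =>
      intro hl
      obtain ⟨w, hw, hwf, hwt⟩ := hl p (Multiset.mem_cons_self _ _)
      obtain ⟨l', m, hs', ht', h1, h2, h3⟩ := ih fun q hq => hl q (Multiset.mem_cons_of_mem hq)
      refine ⟨w + l', (w.map Prod.snd, p.2) ::ₘ m, ?_, ?_, ?_, ?_, ?_⟩
      · intro q hq
        rcases Multiset.mem_add.1 hq with h | h
        exacts [hw q h, hs' q h]
      · intro q hq
        rcases Multiset.mem_cons.1 hq with rfl | h
        exacts [hwt, ht' q h]
      · simp [hwf, h1]
      · simp [h2]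
      · simp [h3]
  · rintro ⟨l', hl', ha, m, hm, hmf, hmu⟩
    -- by induction on m, split l' into blocks matching m
    suffices h : ∀ m : Multiset (Multiset T × U), (∀ q ∈ m, q ∈ t) →
        ∀ l' : Multiset (Multiset S × T), (∀ q ∈ l', q ∈ s) →
        l'.map Prod.snd = (m.map Prod.fst).sum →
        ∃ l : Multiset (Multiset S × U), (∀ q ∈ l, q ∈ MComp t s) ∧
          (l.map Prod.fst).sum = (l'.map Prod.fst).sum ∧
          l.map Prod.snd = m.map Prod.snd by
      obtain ⟨l, hlc, h1, h2⟩ := h m hm l' hl' (by simpa using hmf)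
      exact ⟨l, hlc, by rw [ha, h1], by rw [h2]; exact hmu⟩
    clear hl' ha hm hmf hmu m l'
    intro m
    induction m using Multiset.induction with
    | empty =>
      intro _ l' _ hmap
      simp only [Multiset.map_zero, Multiset.sum_zero, Multiset.map_eq_zero] at hmap
      subst hmap
      exact ⟨0, by simp, by simp, by simp⟩
    | cons p m ih =>
      intro hm l' hl' hmap
      rw [Multiset.map_cons, Multiset.sum_cons] at hmap
      obtain ⟨l₁, l₂, rfl, h1, h2⟩ := map_eq_add_split Prod.snd p.1 l' _ hmap
      obtain ⟨l, hlc, hA, hB⟩ := ih (fun q hq => hm q (Multiset.mem_cons_of_mem hq)) l₂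
        (fun q hq => hl' q (Multiset.mem_add.2 (Or.inr hq))) h2
      refine ⟨((l₁.map Prod.fst).sum, p.2) ::ₘ l, ?_, ?_, ?_⟩
      · intro q hq
        rcases Multiset.mem_cons.1 hq with rfl | h
        · exact ⟨l₁, fun q hq => hl' q (Multiset.mem_add.2 (Or.inl hq)), rfl,
            by rw [h1]; exact hm p (Multiset.mem_cons_self _ _)⟩
        · exact hlc q h
      · simp [hA]
      · simp [hB]
end

section
/- For any sets S, T, U and any morphism s ⊆ Multiset (S ⊕ T) × U in MRel, there is exactly one morphism Λ(s) ⊆ Multiset S × (Multiset T × U), namely Λ(s) = {(a,(b,β)) | ((a,b),β) ∈ s}, such that ev ∘ (Λ(s) × Id_T) = s, where ev = {(([(b,β)],b),β)}. Hence MRel is cartesian closed with exponential Multiset S × T. -/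
/-- The identity morphism of `S` in `MRel`. -/
def MId (S : Type*) : Set (Multiset S × S) := {p | ∃ α : S, p = ({α}, α)}

/-- The product morphism `f × g : S ⊕ T → X ⊕ Y` in `MRel`, the product of objects being
disjoint union (`Multiset (S ⊕ T)` canonically identified with `Multiset S × Multiset T`). -/
def MProdMor {S T X Y : Type*} (f : Set (Multiset S × X)) (g : Set (Multiset T × Y)) :
    Set (Multiset (S ⊕ T) × (X ⊕ Y)) :=
  {p | (∃ a x, (a, x) ∈ f ∧ p = (a.map Sum.inl, Sum.inl x)) ∨
       (∃ b y, (b, y) ∈ g ∧ p = (b.map Sum.inr, Sum.inr y))}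

/-- The evaluation morphism `ev_{S,T} = {(([(a,β)],a),β)} : (Multiset S × T) ⊕ S → T`. -/
def MEv (S T : Type*) : Set (Multiset ((Multiset S × T) ⊕ S) × T) :=
  {p | ∃ a : Multiset S, p.1 = {Sum.inl (a, p.2)} + a.map Sum.inr}

/-- Currying: `Λ(s) = {(a,(b,β)) | ((a,b),β) ∈ s}`. -/
def MCurry {S T U : Type*} (s : Set (Multiset (S ⊕ T) × U)) :
    Set (Multiset S × (Multiset T × U)) :=
  {p | (p.1.map Sum.inl + p.2.1.map Sum.inr, p.2.2) ∈ s}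

lemma fm_inl_left {S T : Type*} (a : Multiset S) :
    (a.map (Sum.inl : S → S ⊕ T)).filterMap Sum.getLeft? = a := by
  rw [Multiset.filterMap_map]; exact Multiset.filterMap_some _

lemma fm_inr_right {S T : Type*} (b : Multiset T) :
    (b.map (Sum.inr : T → S ⊕ T)).filterMap Sum.getRight? = b := by
  rw [Multiset.filterMap_map]; exact Multiset.filterMap_some _

lemma fm_inr_left {S T : Type*} (b : Multiset T) :
    (b.map (Sum.inr : T → S ⊕ T)).filterMap Sum.getLeft? = 0 := by
  rw [Multiset.filterMap_map]
  induction b using Multiset.induction with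
  | empty => rfl
  | cons x m ih => rw [Multiset.filterMap_cons_none _ _ rfl]; exact ih

lemma fm_inl_right {S T : Type*} (a : Multiset S) :
    (a.map (Sum.inl : S → S ⊕ T)).filterMap Sum.getRight? = 0 := by
  rw [Multiset.filterMap_map]
  induction a using Multiset.induction with
  | empty => rfl
  | cons x m ih => rw [Multiset.filterMap_cons_none _ _ rfl]; exact ih

lemma fm_add {S T : Type*} (f : S → Option T) (a b : Multiset S) :
    (a + b).filterMap f = a.filterMap f + b.filterMap f := by
  induction a using Multiset.induction with
  | empty => simp
  | cons x m ih =>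
    rw [Multiset.cons_add]
    cases h : f x with
    | none => rw [Multiset.filterMap_cons_none _ _ h, Multiset.filterMap_cons_none _ _ h, ih]
    | some y =>
      rw [Multiset.filterMap_cons_some _ _ _ h, Multiset.filterMap_cons_some _ _ _ h, ih,
        Multiset.cons_add]

lemma decomp {S T : Type*} (c : Multiset (S ⊕ T)) :
    c = (c.filterMap Sum.getLeft?).map Sum.inl + (c.filterMap Sum.getRight?).map Sum.inr := by
  induction c using Multiset.induction with
  | empty => rfl
  | cons x m ih =>
    cases x with
    | inl a =>
      rw [Multiset.filterMap_cons_some Sum.getLeft? _ _ (by rfl : Sum.getLeft? (Sum.inl a) = some a),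
        Multiset.filterMap_cons_none (f := Sum.getRight?) (Sum.inl a) m rfl,
        Multiset.map_cons, Multiset.cons_add, ← ih]
    | inr b =>
      rw [Multiset.filterMap_cons_some Sum.getRight? _ _ (by rfl : Sum.getRight? (Sum.inr b) = some b),
        Multiset.filterMap_cons_none (f := Sum.getLeft?) (Sum.inr b) m rfl,
        Multiset.map_cons, Multiset.add_cons, ← ih]

lemma sum_inj {S T : Type*} {a a' : Multiset S} {b b' : Multiset T}
    (h : a.map Sum.inl + b.map Sum.inr = a'.map Sum.inl + b'.map Sum.inr) :
    a = a' ∧ b = b' := by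
  constructor
  · have := congrArg (Multiset.filterMap Sum.getLeft?) h
    simpa [fm_add, fm_inl_left, fm_inr_left] using this
  · have := congrArg (Multiset.filterMap Sum.getRight?) h
    simpa [fm_add, fm_inr_right, fm_inl_right] using this

lemma comp_char {S T U : Type*} (f : Set (Multiset S × (Multiset T × U)))
    (p : Multiset (S ⊕ T) × U) :
    p ∈ MComp (MEv T U) (MProdMor f (MId T)) ↔
      ∃ a₀ a, (a₀, (a, p.2)) ∈ f ∧ p.1 = a₀.map Sum.inl + a.map Sum.inr := by
  constructor
  · rintro ⟨l, hl, hfst, a, ha⟩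
    dsimp only at ha
    rw [Multiset.singleton_add] at ha
    have hmem : (Sum.inl (a, p.2) : (Multiset T × U) ⊕ T) ∈ l.map Prod.snd := by
      rw [ha]; exact Multiset.mem_cons_self _ _
    obtain ⟨q, hq, hq2⟩ := Multiset.mem_map.mp hmem
    obtain ⟨l', rfl⟩ := Multiset.exists_cons_of_mem hq
    rw [Multiset.map_cons, hq2] at ha
    have ha' : l'.map Prod.snd = a.map Sum.inr := (Multiset.cons_inj_right _).mp ha
    obtain ⟨a₀, x, hx, hqeq⟩ :=
      (hl q (Multiset.mem_cons_self _ _)).resolve_right (by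
        rintro ⟨b, y, -, hq'⟩
        rw [hq'] at hq2; exact Sum.inr_ne_inl hq2)
    have hx' : x = (a, p.2) := by
      rw [hqeq] at hq2; exact Sum.inl.inj hq2
    subst hx'
    refine ⟨a₀, a, hx, ?_⟩
    set g : (Multiset T × U) ⊕ T → Multiset (S ⊕ T) :=
      Sum.elim (fun _ => 0) (fun t => {Sum.inr t}) with hg
    have htail : ∀ r ∈ l', Prod.fst r = g (Prod.snd r) := by
      intro r hr
      rcases hl r (Multiset.mem_cons_of_mem hr) with ⟨b, y, -, hr'⟩ | ⟨b, y, hy, hr'⟩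
      · exfalso
        have hm : Prod.snd r ∈ l'.map Prod.snd := Multiset.mem_map_of_mem _ hr
        rw [ha', hr'] at hm
        obtain ⟨t, -, ht⟩ := Multiset.mem_map.mp hm
        exact Sum.inr_ne_inl ht
      · obtain ⟨α, hb⟩ := hy
        rw [Prod.mk.injEq] at hb
        obtain ⟨rfl, rfl⟩ := hb
        rw [hr']; simp [hg]
    have hsum : (l'.map Prod.fst).sum = a.map Sum.inr := by
      rw [Multiset.map_congr rfl htail]
      have h1 : l'.map (fun r => g (Prod.snd r)) = (l'.map Prod.snd).map g := by
        rw [Multiset.map_map]; rfl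
      have h2 : (a.map Sum.inr).map g =
          (a.map (Sum.inr : T → S ⊕ T)).map (fun x => ({x} : Multiset (S ⊕ T))) := by
        rw [Multiset.map_map, Multiset.map_map]; rfl
      rw [h1, ha', h2, Multiset.sum_map_singleton]
    rw [hfst, Multiset.map_cons, Multiset.sum_cons, hsum, hqeq]
  · rintro ⟨a₀, a, hf, hp⟩
    refine ⟨(a₀.map Sum.inl, Sum.inl (a, p.2)) ::ₘ
        a.map (fun t => (({Sum.inr t} : Multiset (S ⊕ T)), (Sum.inr t : (Multiset T × U) ⊕ T))),
      ?_, ?_, ?_⟩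
    · intro q hq
      rcases Multiset.mem_cons.mp hq with rfl | hq
      · exact Or.inl ⟨a₀, (a, p.2), hf, rfl⟩
      · obtain ⟨t, -, rfl⟩ := Multiset.mem_map.mp hq
        exact Or.inr ⟨{t}, t, ⟨t, rfl⟩, by simp⟩
    · rw [Multiset.map_cons, Multiset.sum_cons, Multiset.map_map, hp]
      congr 1
      have : (a.map fun t => ((Prod.fst ∘ fun t =>
          (({Sum.inr t} : Multiset (S ⊕ T)), (Sum.inr t : (Multiset T × U) ⊕ T))) t)) =
          (a.map (Sum.inr : T → S ⊕ T)).map (fun x => ({x} : Multiset _)) := by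
        rw [Multiset.map_map]; rfl
      rw [this, Multiset.sum_map_singleton]
    · refine ⟨a, ?_⟩
      simp only [Multiset.map_cons, Multiset.map_map, Multiset.singleton_add]
      rfl

/-- For any morphism `s : S ⊕ T → U` in `MRel`, `Λ(s)` is the unique morphism
`f : S → (Multiset T × U)` such that `ev ∘ (f × Id_T) = s`; hence `MRel` is cartesian
closed with exponential object `Multiset S × T`. -/
theorem MRel_cartesianClosed {S T U : Type*} (s : Set (Multiset (S ⊕ T) × U)) :
    MComp (MEv T U) (MProdMor (MCurry s) (MId T)) = s ∧
      ∀ f : Set (Multiset S × (Multiset T × U)),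
        MComp (MEv T U) (MProdMor f (MId T)) = s → f = MCurry s := by
  have key : MComp (MEv T U) (MProdMor (MCurry s) (MId T)) = s := by
    ext p
    rw [comp_char]
    constructor
    · rintro ⟨a₀, a, hf, hp⟩
      have : p = (a₀.map Sum.inl + a.map Sum.inr, p.2) := by
        rw [← hp]
      rw [this]; exact hf
    · intro hp
      refine ⟨p.1.filterMap Sum.getLeft?, p.1.filterMap Sum.getRight?, ?_, decomp p.1⟩
      show ((p.1.filterMap Sum.getLeft?).map Sum.inl +
        (p.1.filterMap Sum.getRight?).map Sum.inr, p.2) ∈ s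
      rw [← decomp p.1]; exact hp
  refine ⟨key, fun f hf => ?_⟩
  ext ⟨a₀, a, u⟩
  constructor
  · intro h
    show (a₀.map Sum.inl + a.map Sum.inr, u) ∈ s
    rw [← hf]
    exact (comp_char f (a₀.map Sum.inl + a.map Sum.inr, u)).mpr ⟨a₀, a, h, rfl⟩
  · intro h
    have hs : (a₀.map Sum.inl + a.map Sum.inr, u) ∈ s := h
    rw [← hf] at hs
    obtain ⟨a₀', a', hf', heq⟩ := (comp_char f _).mp hs
    obtain ⟨h1, h2⟩ := sum_inj heq
    rw [h1, h2]
    exact hf'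
end

section
/- The set D of quasi-finite ℕ-indexed sequences of finite multisets, built as the union of the chain D₀ = ∅, D_{n+1} = quasi-finite sequences over D_n, is in canonical bijection with Multiset D × D via (a₁,a₂,a₃,…) ↦ (a₁,(a₂,a₃,…)). -/
/-- Quasi-finite `ℕ`-indexed sequences of finite multisets over `Λ`:
all but finitely many entries are the empty multiset. -/
def QFSeq (Λ : Type*) : Type _ := {f : ℕ → Multiset Λ // (Function.support f).Finite}

/-- The tail of a quasi-finite sequence is quasi-finite. -/
def QFSeq.tail {Λ : Type*} (f : QFSeq Λ) : QFSeq Λ :=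
  ⟨fun i => f.1 (i + 1), by
    have : Function.support (fun i => f.1 (i + 1)) ⊆ (fun i : ℕ => i + 1) ⁻¹' Function.support f.1 := by
      intro i hi; exact hi
    exact Set.Finite.subset
      (Set.Finite.preimage (Set.injOn_of_injective (add_left_injective 1)) f.2) this⟩

/-- Prepending a multiset to a quasi-finite sequence. -/
def QFSeq.cons {Λ : Type*} (m : Multiset Λ) (g : QFSeq Λ) : QFSeq Λ :=
  ⟨fun i => Nat.casesOn i m g.1, by
    apply Set.Finite.subset (Set.Finite.insert 0 (Set.Finite.image (· + 1) g.2))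
    intro i hi
    cases i with
    | zero => exact Set.mem_insert _ _
    | succ n => exact Set.mem_insert_of_mem _ ⟨n, hi, rfl⟩⟩

theorem QFSeq.cons_tail {Λ : Type*} (f : QFSeq Λ) : QFSeq.cons (f.1 0) f.tail = f := by
  apply Subtype.ext
  funext i
  cases i <;> rfl

/-- The set `D`, built as the union of the chain `D₀ = ∅`,
`D_{n+1} = ` (codes of) quasi-finite sequences of finite multisets over `D_n`
(the chain being realized inside an ambient type `Λ` via an injective coding `ι` of
quasi-finite sequences), is in canonical bijection with `Multiset D × D` via
`(a₁,a₂,a₃,…) ↦ (a₁,(a₂,a₃,…))`, i.e. `ι f ↦ (f 0, ι (tail f))`. -/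
theorem D_iso_multiset_prod {Λ : Type*} (ι : QFSeq Λ → Λ) (hι : Function.Injective ι)
    (D : ℕ → Set Λ) (hD0 : D 0 = ∅)
    (hDsucc : ∀ n : ℕ, D (n + 1) = ι '' {f : QFSeq Λ | ∀ i : ℕ, ∀ x ∈ f.1 i, x ∈ D n}) :
    ∃ e : (⋃ n, D n) ≃
        {p : Multiset Λ × Λ | (∀ x ∈ p.1, x ∈ ⋃ n, D n) ∧ p.2 ∈ ⋃ n, D n},
      ∀ (f : QFSeq Λ) (h : ι f ∈ ⋃ n, D n),
        (e ⟨ι f, h⟩ : Multiset Λ × Λ) = (f.1 0, ι f.tail) := by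
  classical
  set U : Set Λ := ⋃ n, D n with hU
  have step : ∀ n, D n ⊆ D (n + 1) := by
    intro n
    induction n with
    | zero => rw [hD0]; exact Set.empty_subset _
    | succ n ih =>
      rw [hDsucc n, hDsucc (n + 1)]
      exact Set.image_mono (fun f hf i x hx => ih (hf i x hx))
  have mono : ∀ {m n : ℕ}, m ≤ n → D m ⊆ D n := fun h => monotone_nat_of_le_succ step h
  -- bounding lemma for multisets
  have msetBound : ∀ m : Multiset Λ, (∀ y ∈ m, y ∈ U) → ∃ N, ∀ y ∈ m, y ∈ D N := by
    intro m
    induction m using Multiset.induction with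
    | empty => exact fun _ => ⟨0, fun y hy => absurd hy (Multiset.notMem_zero y)⟩
    | cons a s ih =>
      intro h
      obtain ⟨Na, hNa⟩ := Set.mem_iUnion.1 (h a (Multiset.mem_cons_self a s))
      obtain ⟨Ns, hNs⟩ := ih (fun y hy => h y (Multiset.mem_cons_of_mem hy))
      refine ⟨max Na Ns, fun y hy => ?_⟩
      rcases Multiset.mem_cons.1 hy with rfl | hy
      · exact mono (le_max_left _ _) hNa
      · exact mono (le_max_right _ _) (hNs y hy)
  have mem_iff : ∀ x, x ∈ U ↔ ∃ f : QFSeq Λ, ι f = x ∧ ∀ i, ∀ y ∈ f.1 i, y ∈ U := by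
    intro x
    constructor
    · intro hx
      obtain ⟨n, hn⟩ := Set.mem_iUnion.1 hx
      cases n with
      | zero => rw [hD0] at hn; exact absurd hn (Set.notMem_empty x)
      | succ n =>
        rw [hDsucc n] at hn
        obtain ⟨f, hf, rfl⟩ := hn
        exact ⟨f, rfl, fun i y hy => Set.mem_iUnion.2 ⟨n, hf i y hy⟩⟩
    · rintro ⟨f, rfl, hf⟩
      have hbig : ∀ i, ∃ N, ∀ y ∈ f.1 i, y ∈ D N := fun i => msetBound _ (hf i)
      choose g hg using hbig
      -- bound over the support
      set N : ℕ := f.2.toFinset.sup g with hN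
      refine Set.mem_iUnion.2 ⟨N + 1, ?_⟩
      rw [hDsucc N]
      refine ⟨f, fun i y hy => ?_, rfl⟩
      by_cases hi : i ∈ Function.support f.1
      · exact mono (Finset.le_sup (f.2.mem_toFinset.2 hi)) (hg i y hy)
      · rw [Function.notMem_support] at hi
        exact absurd (hi ▸ hy) (Multiset.notMem_zero y)
  choose F hF1 hF2 using fun (x : Λ) (hx : x ∈ U) => (mem_iff x).1 hx
  have Funique : ∀ (f : QFSeq Λ) (h : ι f ∈ U), F (ι f) h = f := fun f h => hι (hF1 _ _)
  have tailmem : ∀ (x : Λ) (hx : x ∈ U), ι (F x hx).tail ∈ U := by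
    intro x hx
    exact (mem_iff _).2 ⟨(F x hx).tail, rfl, fun i y hy => hF2 x hx (i + 1) y hy⟩
  refine ⟨{
    toFun := fun x => ⟨((F x.1 x.2).1 0, ι (F x.1 x.2).tail),
      fun y hy => hF2 x.1 x.2 0 y hy, tailmem x.1 x.2⟩
    invFun := fun p => ⟨ι (QFSeq.cons p.1.1 (F p.1.2 p.2.2)),
      (mem_iff _).2 ⟨QFSeq.cons p.1.1 (F p.1.2 p.2.2), rfl, by
        intro i y hy
        cases i with
        | zero => exact p.2.1 y hy
        | succ n => exact hF2 p.1.2 p.2.2 n y hy⟩⟩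
    left_inv := by
      rintro ⟨x, hx⟩
      apply Subtype.ext
      simp only
      rw [Funique (F x hx).tail (tailmem x hx), QFSeq.cons_tail, hF1]
    right_inv := by
      rintro ⟨⟨m, y⟩, hm, hy⟩
      apply Subtype.ext
      have hx : ι (QFSeq.cons m (F y hy)) ∈ U := (mem_iff _).2 ⟨_, rfl, by
        intro i z hz
        cases i with
        | zero => exact hm z hz
        | succ n => exact hF2 y hy n z hz⟩
      simp only
      rw [Funique (QFSeq.cons m (F y hy))]
      have h1 : (QFSeq.cons m (F y hy)).1 0 = m := rfl
      have h2 : (QFSeq.cons m (F y hy)).tail = F y hy := by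
        apply Subtype.ext; funext i; rfl
      rw [h1, h2, hF1]
  }, ?_⟩
  intro f h
  simp only [Equiv.coe_fn_mk]
  rw [Funique f h]
end

section
/- In the relational model D, the interpretation of Δ = λx.x[x^!] is {([a :: α] ⊎ a) :: α | a ∈ Multiset D, α ∈ D}, and the interpretation of Ω = Δ[Δ^!] is empty. -/
variable {D : Type*}

/-- `b :: α`: prepending a multiset to an element of `D ≅ Multiset D × D`. -/
def dcons (e : D ≃ Multiset D × D) (b : Multiset D) (α : D) : D := e.symm (b, α)

/-- The interpretation of `Δ = λx.x[x^!]` in the relational model: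
`⟦Δ⟧ = {([a :: α] ⊎ a) :: α | a ∈ Multiset D, α ∈ D}`. -/
def interpDelta (e : D ≃ Multiset D × D) : Set D :=
  {d | ∃ (a : Multiset D) (α : D), d = dcons e (dcons e a α ::ₘ a) α}

lemma dcons_inj (e : D ≃ Multiset D × D) {m m' : Multiset D} {α α' : D}
    (h : dcons e m α = dcons e m' α') : m = m' ∧ α = α' := by
  have := e.symm.injective h
  exact ⟨congrArg Prod.fst this, congrArg Prod.snd this⟩

lemma key (e : D ≃ Multiset D × D) :
    ∀ n (m : Multiset D) (α : D), Multiset.card m = n → m ≠ 0 →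
      (∀ x ∈ m, x ∈ interpDelta e) → dcons e m α ∉ interpDelta e := by
  intro n
  induction n using Nat.strong_induction_on with
  | _ n ih =>
    intro m α hcard hm0 hmem hΔ
    obtain ⟨a, β, h⟩ := hΔ
    obtain ⟨hma, hαβ⟩ := dcons_inj e h
    have hmem' : dcons e a β ∈ m := by rw [hma]; exact Multiset.mem_cons_self _ _
    obtain ⟨b, γ, hb⟩ := hmem _ hmem'
    obtain ⟨hab, hβγ⟩ := dcons_inj e hb
    have ha0 : a ≠ 0 := by rw [hab]; exact Multiset.cons_ne_zero
    have hlt : Multiset.card a < n := by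
      rw [← hcard, hma, Multiset.card_cons]; omega
    exact ih _ hlt a β rfl ha0
      (fun x hx => hmem x (by rw [hma]; exact Multiset.mem_cons_of_mem hx))
      ⟨b, γ, by rw [← hβγ] at hb ⊢; exact hb⟩

/-- The interpretation of `Ω = Δ[Δ^!]` in the relational model `D` is empty:
no `α` admits a nonempty multiset `m` of elements of `⟦Δ⟧` with `m :: α ∈ ⟦Δ⟧`,
where `⟦Δ⟧ = {([a :: α] ⊎ a) :: α | a ∈ Multiset D, α ∈ D}`. -/
theorem interp_Omega_empty (e : D ≃ Multiset D × D) :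
    {α : D | ∃ m : Multiset D, m ≠ 0 ∧ (∀ x ∈ m, x ∈ interpDelta e) ∧
        dcons e m α ∈ interpDelta e} = ∅ := by
  ext α
  simp only [Set.mem_setOf_eq, Set.mem_empty_iff_false, iff_false, not_exists]
  rintro m ⟨hm0, hmem, hΔ⟩
  exact key e _ m α rfl hm0 hmem hΔ
end
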